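/- A number λ > 0 is an eigenvalue of the operator H on ℓ²(ℤ^d) if and only if 1 is an eigenvalue of the N×N matrix G(λ), i.e. if and only if det(G(λ) − I) = 0. -/

import Mathlib

open MeasureTheory ENNReal Real

noncomputable section
namespace EigenAux
variable {d : ℕ}

def ev (θ : Fin d → ℝ) (x : Fin d → ℤ) : ℝ := ∑ i, θ i * (x i : ℝ)

abbrev box (d : ℕ) : Set (Fin d → ℝ) := Set.Icc (fun _ => -π) (fun _ => π)




lemma ev_add (θ : Fin d → ℝ) (x y : Fin d → ℤ) : ev θ (x + y) = ev θ x + ev θ y := by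
  unfold ev
  rw [← Finset.sum_add_distrib]
  congr 1; ext i; push_cast [Pi.add_apply]; ring

lemma ev_neg (θ : Fin d → ℝ) (x : Fin d → ℤ) : ev θ (-x) = - ev θ x := by
  unfold ev
  rw [← Finset.sum_neg_distrib]
  congr 1; ext i; push_cast [Pi.neg_apply]; ring

lemma ev_zero (θ : Fin d → ℝ) : ev θ (0 : Fin d → ℤ) = 0 := by simp [ev]

lemma ev_sub (θ : Fin d → ℝ) (x y : Fin d → ℤ) : ev θ (x - y) = ev θ x - ev θ y := by
  rw [sub_eq_add_neg, ev_add, ev_neg]; ring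

lemma ev_cont (x : Fin d → ℤ) : Continuous fun θ : Fin d → ℝ => ev θ x := by
  unfold ev; fun_prop




lemma int1d (k : ℤ) : (∫ t in Set.Icc (-π) π, Complex.exp (t * k * Complex.I))
    = ((if k = 0 then 2*π else 0 : ℝ) : ℂ) := by
  rw [MeasureTheory.integral_Icc_eq_integral_Ioc,
    ← intervalIntegral.integral_of_le (by linarith [pi_pos] : -π ≤ π)]
  by_cases hk : k = 0
  · simp [hk]; norm_num; ring
  · have hc : (k : ℂ) * Complex.I ≠ 0 := by
      simp [Complex.ext_iff, Complex.I_ne_zero, hk]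
    have : ∀ t : ℝ, (t : ℂ) * k * Complex.I = (k * Complex.I) * t := by intro t; ring
    simp_rw [this]
    rw [integral_exp_mul_complex hc]
    have h1 : Complex.exp ((k : ℂ) * Complex.I * π) = (-1) ^ k := by
      rw [show (k : ℂ) * Complex.I * π = k * (π * Complex.I) by ring,
        Complex.exp_int_mul, Complex.exp_pi_mul_I]
    have h2 : Complex.exp ((k : ℂ) * Complex.I * (-π : ℝ)) = ((-1) ^ (-k) : ℂ) := by
      rw [show (k : ℂ) * Complex.I * ((-π : ℝ) : ℂ) = ((-k : ℤ) : ℂ) * (π * Complex.I) by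
        push_cast; ring, Complex.exp_int_mul, Complex.exp_pi_mul_I]
    have hsq : ((-1 : ℂ) ^ k) * ((-1 : ℂ) ^ k) = 1 := by
      rw [← zpow_add₀ (by norm_num : (-1:ℂ) ≠ 0), show k + k = 2 * k by ring,
        zpow_mul]
      norm_num
    have h3 : ((-1 : ℂ) ^ (-k)) = (-1) ^ k := by
      rw [zpow_neg, inv_eq_of_mul_eq_one_right hsq]
    rw [h1, h2, h3]
    simp [hk]







lemma orthC (x : Fin d → ℤ) :
    (∫ θ in box d, Complex.exp (ev θ x * Complex.I))
    = ((if x = 0 then (2*π)^d else 0 : ℝ) : ℂ) := by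
  have key : ∀ θ : Fin d → ℝ, Complex.exp (ev θ x * Complex.I)
      = ∏ i, Complex.exp ((θ i * (x i : ℝ) : ℝ) * Complex.I) := by
    intro θ
    rw [← Complex.exp_sum]
    congr 1
    unfold ev
    push_cast
    rw [Finset.sum_mul]
  simp_rw [key]
  rw [← MeasureTheory.integral_indicator (measurableSet_Icc)]
  have ind : (Set.indicator (box d)
        (fun θ => ∏ i, Complex.exp ((θ i * (x i : ℝ) : ℝ) * Complex.I)))
      = fun θ => ∏ i, Set.indicator (Set.Icc (-π) π)
        (fun t : ℝ => Complex.exp ((t * (x i : ℝ) : ℝ) * Complex.I)) (θ i) := by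
    funext θ
    by_cases h : θ ∈ box d
    · rw [Set.indicator_of_mem h]
      have h' := h
      rw [Set.mem_Icc] at h'
      refine (Finset.prod_congr rfl fun i _ => ?_).symm
      rw [Set.indicator_of_mem]
      rw [Set.mem_Icc]
      exact ⟨h'.1 i, h'.2 i⟩
    · rw [Set.indicator_of_notMem h]
      have : ∃ i, θ i ∉ Set.Icc (-π) π := by
        by_contra hc
        push_neg at hc
        exact h (Set.mem_Icc.mpr ⟨fun i => (hc i).1, fun i => (hc i).2⟩)
      obtain ⟨i, hi⟩ := this
      exact (Finset.prod_eq_zero (Finset.mem_univ i)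
        (by rw [Set.indicator_of_notMem hi])).symm
  rw [ind]
  rw [MeasureTheory.integral_fintype_prod_volume_eq_prod (ι := Fin d)
    (f := fun i t => Set.indicator (Set.Icc (-π) π)
      (fun s : ℝ => Complex.exp ((s * (x i : ℝ) : ℝ) * Complex.I)) t)]
  have : ∀ i, (∫ t : ℝ, Set.indicator (Set.Icc (-π) π)
      (fun s : ℝ => Complex.exp ((s * (x i : ℝ) : ℝ) * Complex.I)) t)
      = ((if x i = 0 then 2*π else 0 : ℝ) : ℂ) := by
    intro i
    rw [MeasureTheory.integral_indicator (measurableSet_Icc)]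
    simp_rw [Complex.ofReal_mul]
    exact int1d (x i)
  simp_rw [this]
  rw [← Complex.ofReal_prod]
  congr 1
  by_cases hx : x = 0
  · simp [hx]
  · have : ∃ i, x i ≠ 0 := Function.ne_iff.mp hx
    obtain ⟨i, hi⟩ := this
    rw [Finset.prod_eq_zero (Finset.mem_univ i) (by simp [hi]), if_neg hx]



lemma cont_exp_ev (x : Fin d → ℤ) :
    Continuous fun θ : Fin d → ℝ => Complex.exp ((ev θ x : ℝ) * Complex.I) := by
  apply Complex.continuous_exp.comp
  apply Continuous.mul _ continuous_const
  exact Complex.continuous_ofReal.comp (by unfold ev; fun_prop)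

lemma orth (x : Fin d → ℤ) :
    (∫ θ in box d, Real.cos (ev θ x)) = if x = 0 then (2*π)^d else 0 := by
  have hint : IntegrableOn (fun θ => Complex.exp ((ev θ x : ℝ) * Complex.I)) (box d) volume :=
    (cont_exp_ev x).continuousOn.integrableOn_compact isCompact_Icc
  have hre : ∀ θ : Fin d → ℝ, Real.cos (ev θ x)
      = (Complex.exp ((ev θ x : ℝ) * Complex.I)).re :=
    fun θ => (Complex.exp_ofReal_mul_I_re _).symm
  simp_rw [hre]
  rw [show (fun θ : Fin d → ℝ => (Complex.exp ((ev θ x : ℝ) * Complex.I)).re) = (fun θ => RCLike.re (Complex.exp ((ev θ x : ℝ) * Complex.I))) from rfl, integral_re hint, orthC]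
  simp






lemma cont_cos_ev (x : Fin d → ℤ) : Continuous fun θ : Fin d → ℝ => Real.cos (ev θ x) :=
  Real.continuous_cos.comp (ev_cont x)

lemma intOn {f : (Fin d → ℝ) → ℝ} (hf : Continuous f) : IntegrableOn f (box d) volume :=
  hf.continuousOn.integrableOn_compact isCompact_Icc

lemma orth2 (x y : Fin d → ℤ) :
    ∫ θ in box d, Real.cos (ev θ x) * Real.cos (ev θ y)
    = ((if y = x then (2*π)^d else 0) + (if y = -x then (2*π)^d else 0)) / 2 := by
  have h1 : ∀ θ : Fin d → ℝ, Real.cos (ev θ x) * Real.cos (ev θ y)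
      = (Real.cos (ev θ (x - y)) + Real.cos (ev θ (x + y))) / 2 := by
    intro θ; rw [ev_sub, ev_add, Real.cos_sub, Real.cos_add]; ring
  simp_rw [h1]
  rw [integral_div, integral_add (intOn (cont_cos_ev _)) (intOn (cont_cos_ev _)),
    orth, orth]
  congr 2
  · apply if_congr _ rfl rfl
    rw [sub_eq_zero, eq_comm]
  · apply if_congr _ rfl rfl
    rw [add_comm]
    exact add_eq_zero_iff_eq_neg

lemma bessel (w : (Fin d → ℝ) → ℝ) (hw : Continuous w) (S : Finset (Fin d → ℤ)) :
    ∑ x ∈ S, (∫ θ in box d, w θ * Real.cos (ev θ x))^2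
       ≤ (2*π)^d * ∫ θ in box d, (w θ)^2 := by
  set c : (Fin d → ℤ) → ℝ := fun x => ∫ θ in box d, w θ * Real.cos (ev θ x) with hc
  have hceven : ∀ x, c (-x) = c x := by
    intro x; simp only [hc]
    congr 1; funext θ; rw [ev_neg, Real.cos_neg]
  set T : Finset (Fin d → ℤ) := S ∪ S.image (fun x => -x) with hT
  have hST : S ⊆ T := Finset.subset_union_left
  have hTsym : ∀ x ∈ T, -x ∈ T := by
    intro x hx
    rw [hT, Finset.mem_union] at hx ⊢
    rcases hx with h | h
    · right; exact Finset.mem_image.mpr ⟨x, h, rfl⟩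
    · left; obtain ⟨y, hy, rfl⟩ := Finset.mem_image.mp h; simpa using hy
  have step1 : ∑ x ∈ S, (c x)^2 ≤ ∑ x ∈ T, (c x)^2 :=
    Finset.sum_le_sum_of_subset_of_nonneg hST (fun _ _ _ => sq_nonneg _)
  have hpos : (0:ℝ) < (2*π)^d := pow_pos (by positivity) d
  set r : ℝ := ((2*π)^d)⁻¹ with hr
  have hrpos : 0 < r := inv_pos.mpr hpos
  -- the expansion
  have hwp : (∫ θ in box d, w θ * (∑ x ∈ T, c x * Real.cos (ev θ x)))
      = ∑ x ∈ T, (c x)^2 := by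
    have : ∀ θ : Fin d → ℝ, w θ * (∑ x ∈ T, c x * Real.cos (ev θ x))
        = ∑ x ∈ T, c x * (w θ * Real.cos (ev θ x)) := by
      intro θ; rw [Finset.mul_sum]; congr 1; funext x; ring
    simp_rw [this]
    rw [integral_finset_sum _ (fun x _ => (Integrable.const_mul
      (intOn (f := fun θ => w θ * Real.cos (ev θ x)) (hw.mul (cont_cos_ev x))) _))]
    refine Finset.sum_congr rfl fun x _ => ?_
    rw [integral_const_mul, sq]
  have hpp : (∫ θ in box d, (∑ x ∈ T, c x * Real.cos (ev θ x))^2)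
      = (2*π)^d * ∑ x ∈ T, (c x)^2 := by
    have expand : ∀ θ : Fin d → ℝ, (∑ x ∈ T, c x * Real.cos (ev θ x))^2
        = ∑ x ∈ T, ∑ y ∈ T, (c x * c y) * (Real.cos (ev θ x) * Real.cos (ev θ y)) := by
      intro θ
      rw [sq, Finset.sum_mul_sum]
      refine Finset.sum_congr rfl fun x _ => Finset.sum_congr rfl fun y _ => ?_
      ring
    simp_rw [expand]
    rw [integral_finset_sum _ (fun x _ => integrable_finset_sum _ (fun y _ =>
      Integrable.const_mul (intOn (f := fun θ => Real.cos (ev θ x) * Real.cos (ev θ y)) ((cont_cos_ev x).mul (cont_cos_ev y))) _))]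
    have inner : ∀ x ∈ T, (∫ θ in box d, ∑ y ∈ T,
        (c x * c y) * (Real.cos (ev θ x) * Real.cos (ev θ y))) = (2*π)^d * (c x)^2 := by
      intro x hx
      rw [integral_finset_sum _ (fun y _ =>
        Integrable.const_mul (intOn (f := fun θ => Real.cos (ev θ x) * Real.cos (ev θ y)) ((cont_cos_ev x).mul (cont_cos_ev y))) _)]
      have : ∀ y ∈ T, (∫ θ in box d, (c x * c y) *
          (Real.cos (ev θ x) * Real.cos (ev θ y)))
          = c x * c y * (((if y = x then (2*π)^d else 0)
            + (if y = -x then (2*π)^d else 0)) / 2) := by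
        intro y _
        rw [integral_const_mul, orth2]
      rw [Finset.sum_congr rfl this]
      have split : ∀ y ∈ T, c x * c y * (((if y = x then (2*π)^d else 0)
            + (if y = -x then (2*π)^d else 0)) / 2)
          = (if y = x then c x * c y * (2*π)^d / 2 else 0)
            + (if y = -x then c x * c y * (2*π)^d / 2 else 0) := by
        intro y _
        split_ifs with h1 h2 <;> ring
      rw [Finset.sum_congr rfl split, Finset.sum_add_distrib,
        Finset.sum_ite_eq' T x (fun y => c x * c y * (2*π)^d / 2),
        Finset.sum_ite_eq' T (-x) (fun y => c x * c y * (2*π)^d / 2),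
        if_pos hx, if_pos (hTsym x hx), hceven]
      ring
    rw [Finset.sum_congr rfl inner, ← Finset.mul_sum]
  have key : 0 ≤ ∫ θ in box d, (w θ - r * (∑ x ∈ T, c x * Real.cos (ev θ x)))^2 :=
    integral_nonneg (fun θ => sq_nonneg _)
  have contp : Continuous fun θ : Fin d → ℝ => ∑ x ∈ T, c x * Real.cos (ev θ x) := by
    apply continuous_finset_sum
    exact fun x _ => (continuous_const.mul (cont_cos_ev x))
  have expand2 : (∫ θ in box d, (w θ - r * (∑ x ∈ T, c x * Real.cos (ev θ x)))^2)
      = (∫ θ in box d, (w θ)^2) - 2 * r * (∑ x ∈ T, (c x)^2)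
        + r^2 * ((2*π)^d * ∑ x ∈ T, (c x)^2) := by
    have : ∀ θ : Fin d → ℝ, (w θ - r * (∑ x ∈ T, c x * Real.cos (ev θ x)))^2
        = (w θ)^2 - (2*r) * (w θ * (∑ x ∈ T, c x * Real.cos (ev θ x)))
          + r^2 * (∑ x ∈ T, c x * Real.cos (ev θ x))^2 := by
      intro θ; ring
    simp_rw [this]
    have I1 : Integrable (fun θ : Fin d → ℝ => (w θ)^2
        - 2*r*(w θ * ∑ x ∈ T, c x * Real.cos (ev θ x))) (volume.restrict (box d)) :=
      ((intOn (hw.pow 2)).sub (Integrable.const_mul (intOn (hw.mul contp)) _))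
    have I2 : Integrable (fun θ : Fin d → ℝ =>
        r^2 * (∑ x ∈ T, c x * Real.cos (ev θ x))^2) (volume.restrict (box d)) :=
      Integrable.const_mul (intOn (contp.pow 2)) _
    have I3 : Integrable (fun θ : Fin d → ℝ => (w θ)^2) (volume.restrict (box d)) :=
      intOn (hw.pow 2)
    have I4 : Integrable (fun θ : Fin d → ℝ =>
        2*r*(w θ * ∑ x ∈ T, c x * Real.cos (ev θ x))) (volume.restrict (box d)) :=
      Integrable.const_mul (intOn (hw.mul contp)) _
    rw [integral_add I1 I2, integral_sub I3 I4,
      integral_const_mul, integral_const_mul, hwp, hpp]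
  rw [expand2] at key
  have hr2 : r^2 * ((2*π)^d * ∑ x ∈ T, (c x)^2) = r * ∑ x ∈ T, (c x)^2 := by
    rw [hr]; field_simp
  rw [hr2] at key
  have : r * (∑ x ∈ T, (c x)^2) ≤ ∫ θ in box d, (w θ)^2 := by linarith
  calc ∑ x ∈ S, (c x)^2 ≤ ∑ x ∈ T, (c x)^2 := step1
    _ = (2*π)^d * (r * (∑ x ∈ T, (c x)^2)) := by rw [hr]; field_simp
    _ ≤ (2*π)^d * ∫ θ in box d, (w θ)^2 := by
        apply mul_le_mul_of_nonneg_left this (le_of_lt hpos)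




def pairEquiv (d : ℕ) : ((Fin d → ℤ) × (Fin d → ℤ)) ≃ ((Fin d → ℤ) × (Fin d → ℤ)) where
  toFun p := (p.1 - p.2, p.1)
  invFun q := (q.2, q.2 - q.1)
  left_inv p := by simp
  right_inv q := by simp

lemma lam_sub_A_inj (d : ℕ) (a : (Fin d → ℤ) → ℝ)
    (hnonneg : ∀ z, z ≠ 0 → 0 ≤ a z) (hsum : Summable fun z => |a z|)
    (htot : ∑' z, a z = 0) (lam : ℝ) (hlam : 0 < lam)
    (u : lp (fun _ : Fin d → ℤ => ℝ) 2)
    (heq : ∀ x, lam * u x = ∑' x', a (x - x') * u x') : u = 0 := by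
  have hsa : Summable a := summable_abs_iff.mp hsum
  have hu2 : Summable fun x : Fin d → ℤ => (u x)^2 := by
    have h := (lp.memℓp u).summable (p := 2) (by norm_num)
    refine h.congr fun x => ?_
    rw [ENNReal.toReal_ofNat, Real.norm_eq_abs,
      show ((2:ℝ)) = ((2:ℕ):ℝ) by norm_num, Real.rpow_natCast, sq_abs]
  set M : ℝ := ∑' x, (u x)^2 with hM
  have hMnn : 0 ≤ M := tsum_nonneg fun x => sq_nonneg _
  have hu2' : ∀ z : Fin d → ℤ, Summable fun x => (u (x - z))^2 := fun z =>
    ((Equiv.subRight z).summable_iff (f := fun y => (u y)^2)).mpr hu2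
  have hbound : ∀ (z : Fin d → ℤ) (x : Fin d → ℤ),
      |u x * u (x - z)| ≤ ((u x)^2 + (u (x - z))^2)/2 := by
    intro z x
    rw [abs_mul]
    nlinarith [sq_nonneg (|u x| - |u (x - z)|), sq_abs (u x), sq_abs (u (x - z)),
      abs_nonneg (u x), abs_nonneg (u (x - z))]
  have hs : ∀ z : Fin d → ℤ, Summable fun x => |u x * u (x - z)| := by
    intro z
    exact Summable.of_nonneg_of_le (fun x => abs_nonneg _) (hbound z)
      (((hu2.add (hu2' z)).div_const 2))
  have hsz : ∀ z : Fin d → ℤ, Summable fun x => u x * u (x - z) :=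
    fun z => (hs z).of_abs
  have htz : ∀ z : Fin d → ℤ, (∑' x, |u x * u (x - z)|) ≤ M := by
    intro z
    calc (∑' x, |u x * u (x - z)|) ≤ ∑' x, ((u x)^2 + (u (x - z))^2)/2 :=
          Summable.tsum_le_tsum (hbound z) (hs z) ((hu2.add (hu2' z)).div_const 2)
      _ = ((∑' x, (u x)^2) + ∑' x, (u (x - z))^2)/2 := by
          rw [tsum_div_const, Summable.tsum_add hu2 (hu2' z)]
      _ = M := by
          have hT : (∑' x, (u (x - z) : ℝ)^2) = ∑' y, (u y : ℝ)^2 := by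
            simpa using (Equiv.subRight z).tsum_eq (f := fun y => (u y : ℝ)^2)
          rw [hT]
          ring
  set c : (Fin d → ℤ) → ℝ := fun z => ∑' x, u x * u (x - z) with hc
  have hc0 : c 0 = M := by
    simp only [hc, hM, sub_zero]
    exact tsum_congr fun x => (sq (u x)).symm
  have habs_tsum : ∀ z : Fin d → ℤ, |∑' x, u x * u (x - z)| ≤ ∑' x, |u x * u (x - z)| := by
    intro z
    have hn : Summable fun x => ‖(u x : ℝ) * u (x - z)‖ := by
      simp only [Real.norm_eq_abs]; exact hs z
    have h := norm_tsum_le_tsum_norm hn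
    simp only [Real.norm_eq_abs] at h
    exact h
  have hcle : ∀ z, c z ≤ M := fun z =>
    le_trans (le_trans (le_abs_self _) (habs_tsum z)) (htz z)
  set P : ((Fin d → ℤ) × (Fin d → ℤ)) → ℝ := fun p => a p.1 * (u p.2 * u (p.2 - p.1))
    with hP
  have hPabs : Summable fun p : (Fin d → ℤ) × (Fin d → ℤ) => |P p| := by
    rw [summable_prod_of_nonneg (fun p => abs_nonneg _)]
    refine ⟨fun z => ?_, ?_⟩
    · have hgoal : ∀ x, |a z| * |u x * u (x - z)| = |P (z, x)| := by
        intro x; simp only [hP]; exact (abs_mul _ _).symm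
      exact Summable.congr ((hs z).mul_left |a z|) hgoal
    · have hb : ∀ z : Fin d → ℤ, (∑' x, |P (z, x)|) ≤ |a z| * M := by
        intro z
        have heqz : (∑' x, |P (z, x)|) = |a z| * ∑' x, |u x * u (x - z)| := by
          rw [← tsum_mul_left]
          exact tsum_congr fun x => by simp only [hP]; exact abs_mul _ _
        rw [heqz]
        exact mul_le_mul_of_nonneg_left (htz z) (abs_nonneg _)
      exact Summable.of_nonneg_of_le (fun z => tsum_nonneg fun x => abs_nonneg _) hb
        (hsum.mul_right M)
  have hPsum : Summable P := hPabs.of_abs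
  have id1 : (∑' p, P p) = ∑' z, a z * c z := by
    rw [Summable.tsum_prod hPsum]
    refine tsum_congr fun z => ?_
    simp only [hP]
    exact tsum_mul_left
  have id2 : (∑' p, P p) = lam * M := by
    rw [← (pairEquiv d).tsum_eq P]
    have hcomp : Summable (P ∘ (pairEquiv d)) := ((pairEquiv d).summable_iff).mpr hPsum
    have : ∀ q : ((Fin d → ℤ) × (Fin d → ℤ)), P ((pairEquiv d) q)
        = u q.1 * (a (q.1 - q.2) * u q.2) := by
      intro q
      simp only [hP, pairEquiv, Equiv.coe_fn_mk]
      rw [_root_.sub_sub_cancel]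
      ring
    calc (∑' q, P ((pairEquiv d) q)) = ∑' q : ((Fin d → ℤ) × (Fin d → ℤ)),
            u q.1 * (a (q.1 - q.2) * u q.2) := tsum_congr this
      _ = ∑' (x) (x'), u x * (a (x - x') * u x') :=
          Summable.tsum_prod (hcomp.congr this)
      _ = ∑' x, u x * ∑' x', a (x - x') * u x' := by
          exact tsum_congr fun x => tsum_mul_left
      _ = ∑' x, lam * (u x)^2 := by
          refine tsum_congr fun x => ?_
          rw [← heq x]; ring
      _ = lam * M := tsum_mul_left
  have hsumz : Summable fun z => a z * c z := by
    refine Summable.of_abs ?_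
    apply Summable.of_nonneg_of_le (fun z => abs_nonneg _) (fun z => ?_) (hsum.mul_right M)
    rw [abs_mul]
    apply mul_le_mul_of_nonneg_left _ (abs_nonneg _)
    calc |c z| ≤ ∑' x, |u x * u (x - z)| := habs_tsum z
      _ ≤ M := htz z
  have hle : lam * M ≤ 0 := by
    rw [← id2, id1]
    calc (∑' z, a z * c z) ≤ ∑' z, a z * M := by
          apply Summable.tsum_le_tsum _ hsumz (hsa.mul_right M)
          intro z
          by_cases hz : z = 0
          · rw [hz, hc0]
          · exact mul_le_mul_of_nonneg_left (hcle z) (hnonneg z hz)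
      _ = (∑' z, a z) * M := by rw [tsum_mul_right]
      _ = 0 := by rw [htot]; ring
  have hM0 : M = 0 := by
    have h2 : lam * M ≤ lam * 0 := by simpa using hle
    exact le_antisymm (le_of_mul_le_mul_left h2 hlam) hMnn
  apply lp.ext
  funext x
  have h1 : (u x : ℝ)^2 ≤ M := Summable.le_tsum hu2 x (fun y _ => sq_nonneg _)
  have h3 : (u x : ℝ)^2 = 0 := le_antisymm (hM0 ▸ h1) (sq_nonneg _)
  have h4 := pow_eq_zero_iff (n := 2) (by norm_num) |>.mp h3
  simpa using h4




section withA
variable (a : (Fin d → ℤ) → ℝ) (phi : (Fin d → ℝ) → ℝ)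

lemma summand_cos (θ : Fin d → ℝ) (hsum : Summable fun z => |a z|) :
    Summable fun z : Fin d → ℤ => a z * Real.cos (ev θ z) := by
  apply Summable.of_abs
  apply Summable.of_nonneg_of_le (fun z => abs_nonneg _) _ hsum
  intro z
  rw [abs_mul]
  calc |a z| * |Real.cos (ev θ z)| ≤ |a z| * 1 :=
        mul_le_mul_of_nonneg_left (Real.abs_cos_le_one _) (abs_nonneg _)
    _ = |a z| := mul_one _

lemma summand_sin (θ : Fin d → ℝ) (hsum : Summable fun z => |a z|) :
    Summable fun z : Fin d → ℤ => a z * Real.sin (ev θ z) := by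
  apply Summable.of_abs
  apply Summable.of_nonneg_of_le (fun z => abs_nonneg _) _ hsum
  intro z
  rw [abs_mul]
  calc |a z| * |Real.sin (ev θ z)| ≤ |a z| * 1 :=
        mul_le_mul_of_nonneg_left (Real.abs_sin_le_one _) (abs_nonneg _)
    _ = |a z| := mul_one _

lemma phi_cont (hsum : Summable fun z => |a z|)
    (hphi : ∀ θ, phi θ = ∑' z : Fin d → ℤ, a z * Real.cos (ev θ z)) :
    Continuous phi := by
  have h : phi = fun θ => ∑' z : Fin d → ℤ, a z * Real.cos (ev θ z) := funext hphi
  rw [h]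
  apply continuous_tsum (fun z => continuous_const.mul (cont_cos_ev z)) hsum
  intro z θ
  show ‖a z * Real.cos (ev θ z)‖ ≤ |a z|
  rw [Real.norm_eq_abs, abs_mul]
  calc |a z| * |Real.cos (ev θ z)| ≤ |a z| * 1 :=
        mul_le_mul_of_nonneg_left (Real.abs_cos_le_one _) (abs_nonneg _)
    _ = |a z| := mul_one _

lemma phi_nonpos (hnonneg : ∀ z, z ≠ 0 → 0 ≤ a z) (hsum : Summable fun z => |a z|)
    (htot : ∑' z, a z = 0)
    (hphi : ∀ θ, phi θ = ∑' z : Fin d → ℤ, a z * Real.cos (ev θ z)) :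
    ∀ θ, phi θ ≤ 0 := by
  intro θ
  rw [hphi]
  calc (∑' z : Fin d → ℤ, a z * Real.cos (ev θ z)) ≤ ∑' z, a z := by
        apply Summable.tsum_le_tsum _ (summand_cos a θ hsum) (summable_abs_iff.mp hsum)
        intro z
        by_cases hz : z = 0
        · rw [hz, ev_zero, Real.cos_zero, mul_one]
        · calc a z * Real.cos (ev θ z) ≤ a z * 1 :=
              mul_le_mul_of_nonneg_left (Real.cos_le_one _) (hnonneg z hz)
            _ = a z := mul_one _
    _ = 0 := htot

lemma sin_sum_zero (hsymm : ∀ z, a z = a (-z)) (hsum : Summable fun z => |a z|)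
    (θ : Fin d → ℝ) : (∑' z : Fin d → ℤ, a z * Real.sin (ev θ z)) = 0 := by
  have h := (Equiv.neg (Fin d → ℤ)).tsum_eq (fun z => a z * Real.sin (ev θ z))
  simp only [Equiv.neg_apply] at h
  have h2 : ∀ z : Fin d → ℤ, a (-z) * Real.sin (ev θ (-z))
      = -(a z * Real.sin (ev θ z)) := by
    intro z
    rw [← hsymm z, ev_neg, Real.sin_neg]
    ring
  rw [tsum_congr h2, tsum_neg] at h
  linarith [h]

lemma cos_conv (hsymm : ∀ z, a z = a (-z)) (hsum : Summable fun z => |a z|)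
    (hphi : ∀ θ, phi θ = ∑' z : Fin d → ℤ, a z * Real.cos (ev θ z))
    (x : Fin d → ℤ) (θ : Fin d → ℝ) :
    (∑' z : Fin d → ℤ, a z * Real.cos (ev θ (x - z)))
      = Real.cos (ev θ x) * phi θ := by
  have hterm : ∀ z : Fin d → ℤ, a z * Real.cos (ev θ (x - z))
      = Real.cos (ev θ x) * (a z * Real.cos (ev θ z))
        + Real.sin (ev θ x) * (a z * Real.sin (ev θ z)) := by
    intro z
    rw [ev_sub, Real.cos_sub]
    ring
  rw [tsum_congr hterm, Summable.tsum_add ((summand_cos a θ hsum).mul_left _)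
    ((summand_sin a θ hsum).mul_left _), tsum_mul_left, tsum_mul_left,
    sin_sum_zero a hsymm hsum θ, hphi]
  ring

end withA

section res
variable (a : (Fin d → ℤ) → ℝ) (phi : (Fin d → ℝ) → ℝ) (lam : ℝ)

lemma denom_pos (hnonneg : ∀ z, z ≠ 0 → 0 ≤ a z) (hsum : Summable fun z => |a z|)
    (htot : ∑' z, a z = 0)
    (hphi : ∀ θ, phi θ = ∑' z : Fin d → ℤ, a z * Real.cos (ev θ z))
    (hlam : 0 < lam) : ∀ θ : Fin d → ℝ, 0 < lam - phi θ := by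
  intro θ
  have := phi_nonpos a phi hnonneg hsum htot hphi θ
  linarith

lemma resolvent_id
    (hsymm : ∀ z, a z = a (-z)) (hnonneg : ∀ z, z ≠ 0 → 0 ≤ a z)
    (hsum : Summable fun z => |a z|) (htot : ∑' z, a z = 0)
    (hphi : ∀ θ, phi θ = ∑' z : Fin d → ℤ, a z * Real.cos (ev θ z))
    (hlam : 0 < lam)
    (Iv : (Fin d → ℤ) → ℝ)
    (hIv : ∀ x, Iv x = ((2*π)^d)⁻¹ * ∫ θ in box d, Real.cos (ev θ x) / (lam - phi θ))
    (x : Fin d → ℤ) :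
    lam * Iv x - (∑' z : Fin d → ℤ, a z * Iv (x - z)) = if x = 0 then 1 else 0 := by
  have hD := denom_pos a phi lam hnonneg hsum htot hphi hlam
  have hDne : ∀ θ, lam - phi θ ≠ 0 := fun θ => ne_of_gt (hD θ)
  have hphic : Continuous phi := phi_cont a phi hsum hphi
  have hwcont : Continuous fun θ : Fin d → ℝ => (lam - phi θ)⁻¹ :=
    Continuous.inv₀ (continuous_const.sub hphic) hDne
  have hcont : ∀ y : Fin d → ℤ,
      Continuous fun θ : Fin d → ℝ => Real.cos (ev θ y) / (lam - phi θ) := by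
    intro y
    simp only [div_eq_mul_inv]
    exact (cont_cos_ev y).mul hwcont
  have hKpos : (0:ℝ) < (2*π)^d := pow_pos (by positivity) d
  set K : ℝ := ((2*π)^d)⁻¹ with hK
  -- Step 1: rewrite the sum
  have step1 : (∑' z : Fin d → ℤ, a z * Iv (x - z))
      = K * ∑' z : Fin d → ℤ,
          ∫ θ in box d, a z * (Real.cos (ev θ (x - z)) / (lam - phi θ)) := by
    rw [← tsum_mul_left]
    refine tsum_congr fun z => ?_
    rw [hIv, integral_const_mul]
    ring
  -- Step 2: swap tsum and integral
  have step2 : (∑' z : Fin d → ℤ,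
        ∫ θ in box d, a z * (Real.cos (ev θ (x - z)) / (lam - phi θ)))
      = ∫ θ in box d, ∑' z : Fin d → ℤ,
          a z * (Real.cos (ev θ (x - z)) / (lam - phi θ)) := by
    refine (integral_tsum (fun z => ((continuous_const.mul (hcont (x - z))).aestronglyMeasurable)) ?_).symm
    have hb : ∀ z : Fin d → ℤ, (∫⁻ θ in box d,
        ‖a z * (Real.cos (ev θ (x - z)) / (lam - phi θ))‖₊ ∂volume)
        ≤ ENNReal.ofReal (|a z| * lam⁻¹) * volume (box d) := by
      intro z
      have hptw : ∀ θ : Fin d → ℝ,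
          (‖a z * (Real.cos (ev θ (x - z)) / (lam - phi θ))‖₊ : ℝ≥0∞)
          ≤ ENNReal.ofReal (|a z| * lam⁻¹) := by
        intro θ
        rw [← enorm_eq_nnnorm, ← ofReal_norm]
        apply ENNReal.ofReal_le_ofReal
        have hphin : phi θ ≤ 0 := phi_nonpos a phi hnonneg hsum htot hphi θ
        rw [Real.norm_eq_abs, abs_mul, abs_div, abs_of_pos (hD θ)]
        apply mul_le_mul (le_refl _) _ _ (abs_nonneg _)
        · rw [← one_div]
          apply div_le_div₀ zero_le_one (Real.abs_cos_le_one _) hlam (by linarith)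
        · exact div_nonneg (abs_nonneg _) (le_of_lt (hD θ))
      calc (∫⁻ θ in box d, ‖a z * (Real.cos (ev θ (x - z)) / (lam - phi θ))‖₊ ∂volume)
          ≤ ∫⁻ _ in box d, ENNReal.ofReal (|a z| * lam⁻¹) ∂volume :=
            lintegral_mono fun θ => hptw θ
        _ = ENNReal.ofReal (|a z| * lam⁻¹) * volume (box d) := by
            rw [setLIntegral_const]
      -- done
    apply ne_of_lt
    calc (∑' z : Fin d → ℤ, ∫⁻ θ in box d,
          ‖a z * (Real.cos (ev θ (x - z)) / (lam - phi θ))‖₊ ∂volume)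
        ≤ ∑' z : Fin d → ℤ, ENNReal.ofReal (|a z| * lam⁻¹) * volume (box d) :=
          ENNReal.tsum_le_tsum hb
      _ = (∑' z : Fin d → ℤ, ENNReal.ofReal (|a z| * lam⁻¹)) * volume (box d) :=
          ENNReal.tsum_mul_right
      _ < ⊤ := by
          apply ENNReal.mul_lt_top
          · rw [← ENNReal.ofReal_tsum_of_nonneg (fun z => by positivity)
              (hsum.mul_right lam⁻¹)]
            exact ENNReal.ofReal_lt_top
          · exact IsCompact.measure_lt_top isCompact_Icc
  have step3 : ∀ θ : Fin d → ℝ,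
      (∑' z : Fin d → ℤ, a z * (Real.cos (ev θ (x - z)) / (lam - phi θ)))
      = (Real.cos (ev θ x) * phi θ) / (lam - phi θ) := by
    intro θ
    have h1 : ∀ z : Fin d → ℤ, a z * (Real.cos (ev θ (x - z)) / (lam - phi θ))
        = (a z * Real.cos (ev θ (x - z))) / (lam - phi θ) := fun z => by ring
    rw [tsum_congr h1, tsum_div_const, cos_conv a phi hsymm hsum hphi x θ]
  have step23 : (∑' z : Fin d → ℤ, a z * Iv (x - z))
      = K * ∫ θ in box d, (Real.cos (ev θ x) * phi θ) / (lam - phi θ) := by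
    rw [step1, step2]
    congr 1
    simp_rw [step3]
  have hJ1int : IntegrableOn
      (fun θ : Fin d → ℝ => lam * (Real.cos (ev θ x) / (lam - phi θ)))
      (box d) volume := Integrable.const_mul (intOn (hcont x)) lam
  have hJ2int : IntegrableOn
      (fun θ : Fin d → ℝ => (Real.cos (ev θ x) * phi θ) / (lam - phi θ))
      (box d) volume := by
    apply intOn
    simp only [div_eq_mul_inv]
    exact ((cont_cos_ev x).mul hphic).mul hwcont
  calc lam * Iv x - (∑' z : Fin d → ℤ, a z * Iv (x - z))
      = K * ((∫ θ in box d, lam * (Real.cos (ev θ x) / (lam - phi θ)))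
        - ∫ θ in box d, (Real.cos (ev θ x) * phi θ) / (lam - phi θ)) := by
        rw [step23, hIv x, integral_const_mul]
        ring
    _ = K * ∫ θ in box d, (lam * (Real.cos (ev θ x) / (lam - phi θ))
        - (Real.cos (ev θ x) * phi θ) / (lam - phi θ)) := by
        rw [integral_sub hJ1int hJ2int]
    _ = K * ∫ θ in box d, Real.cos (ev θ x) := by
        congr 1
        have hptw : ∀ θ : Fin d → ℝ, lam * (Real.cos (ev θ x) / (lam - phi θ))
            - (Real.cos (ev θ x) * phi θ) / (lam - phi θ) = Real.cos (ev θ x) := by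
          intro θ
          field_simp [hDne θ]
        simp_rw [hptw]
    _ = if x = 0 then 1 else 0 := by
        rw [orth]
        by_cases hx : x = 0
        · simp only [hx, if_pos]
          exact inv_mul_cancel₀ (ne_of_gt hKpos)
        · simp [hx]

end res




section res
variable (a : (Fin d → ℤ) → ℝ) (phi : (Fin d → ℝ) → ℝ) (lam : ℝ)


lemma Iv_even (Iv : (Fin d → ℤ) → ℝ)
    (hIv : ∀ x, Iv x = ((2*π)^d)⁻¹ * ∫ θ in box d, Real.cos (ev θ x) / (lam - phi θ))
    (x : Fin d → ℤ) : Iv (-x) = Iv x := by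
  rw [hIv, hIv]
  congr 1
  have h : ∀ θ : Fin d → ℝ, Real.cos (ev θ (-x)) / (lam - phi θ)
      = Real.cos (ev θ x) / (lam - phi θ) := by
    intro θ; rw [ev_neg, Real.cos_neg]
  simp_rw [h]

lemma memlp_Iv (hnonneg : ∀ z, z ≠ 0 → 0 ≤ a z) (hsum : Summable fun z => |a z|)
    (htot : ∑' z, a z = 0)
    (hphi : ∀ θ, phi θ = ∑' z : Fin d → ℤ, a z * Real.cos (ev θ z))
    (hlam : 0 < lam) (Iv : (Fin d → ℤ) → ℝ)
    (hIv : ∀ x, Iv x = ((2*π)^d)⁻¹ * ∫ θ in box d, Real.cos (ev θ x) / (lam - phi θ))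
    (y : Fin d → ℤ) :
    Memℓp (fun x : Fin d → ℤ => Iv (x - y)) 2 := by
  have hD := denom_pos a phi lam hnonneg hsum htot hphi hlam
  have hDne : ∀ θ, lam - phi θ ≠ 0 := fun θ => ne_of_gt (hD θ)
  have hphic : Continuous phi := phi_cont a phi hsum hphi
  have hw : Continuous fun θ : Fin d → ℝ => (lam - phi θ)⁻¹ :=
    Continuous.inv₀ (continuous_const.sub hphic) hDne
  have hIv' : ∀ x, Iv x = ((2*π)^d)⁻¹
      * ∫ θ in box d, (lam - phi θ)⁻¹ * Real.cos (ev θ x) := by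
    intro x
    rw [hIv]
    congr 1
    have h : ∀ θ : Fin d → ℝ, Real.cos (ev θ x) / (lam - phi θ)
        = (lam - phi θ)⁻¹ * Real.cos (ev θ x) := by
      intro θ; rw [div_eq_mul_inv, mul_comm]
    simp_rw [h]
  set C : ℝ := (((2*π)^d)⁻¹)^2 * ((2*π)^d * ∫ θ in box d, ((lam - phi θ)⁻¹)^2) with hC
  apply memℓp_gen' (C := C)
  intro s
  have hnorm : ∀ x : Fin d → ℤ, ‖Iv (x - y)‖ ^ (2 : ℝ≥0∞).toReal = (Iv (x - y))^2 := by
    intro x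
    rw [ENNReal.toReal_ofNat, Real.norm_eq_abs,
      show ((2:ℝ)) = ((2:ℕ):ℝ) by norm_num, Real.rpow_natCast, sq_abs]
  rw [Finset.sum_congr rfl (fun x _ => hnorm x)]
  have himg : (∑ x ∈ s, (Iv (x - y))^2)
      = ∑ u ∈ s.image (fun x => x - y), (Iv u)^2 := by
    rw [Finset.sum_image]
    intro x₁ _ x₂ _ h
    have := congrArg (fun t => t + y) h
    simpa using this
  rw [himg]
  set S := s.image (fun x => x - y)
  have hterm : ∀ u : Fin d → ℤ, (Iv u)^2 = (((2*π)^d)⁻¹)^2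
      * (∫ θ in box d, (lam - phi θ)⁻¹ * Real.cos (ev θ u))^2 := by
    intro u
    rw [hIv' u, mul_pow]
  rw [Finset.sum_congr rfl (fun u _ => hterm u), ← Finset.mul_sum]
  rw [hC]
  apply mul_le_mul_of_nonneg_left _ (sq_nonneg _)
  exact bessel _ hw S

end res




section res
variable (a : (Fin d → ℤ) → ℝ) (phi : (Fin d → ℝ) → ℝ) (lam : ℝ)


lemma resolvent_trans
    (hsymm : ∀ z, a z = a (-z)) (hnonneg : ∀ z, z ≠ 0 → 0 ≤ a z)
    (hsum : Summable fun z => |a z|) (htot : ∑' z, a z = 0)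
    (hphi : ∀ θ, phi θ = ∑' z : Fin d → ℤ, a z * Real.cos (ev θ z))
    (hlam : 0 < lam)
    (Iv : (Fin d → ℤ) → ℝ)
    (hIv : ∀ x, Iv x = ((2*π)^d)⁻¹ * ∫ θ in box d, Real.cos (ev θ x) / (lam - phi θ))
    (y x : Fin d → ℤ) :
    lam * Iv (x - y) - (∑' x' : Fin d → ℤ, a (x - x') * Iv (x' - y))
      = if x = y then 1 else 0 := by
  have h1 : (∑' x' : Fin d → ℤ, a (x - x') * Iv (x' - y))
      = ∑' z : Fin d → ℤ, a z * Iv ((x - y) - z) := by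
    rw [← (Equiv.subLeft x).tsum_eq (f := fun x' => a (x - x') * Iv (x' - y))]
    refine tsum_congr fun z => ?_
    simp only [Equiv.subLeft_apply]
    rw [_root_.sub_sub_cancel]
    congr 2
    abel
  rw [h1, resolvent_id a phi lam hsymm hnonneg hsum htot hphi hlam Iv hIv (x - y)]
  congr 1
  · simp [sub_eq_zero]
end res

-- boundedness of an lp 2 function and convolution summability
lemma lp2_bound (u : lp (fun _ : Fin d → ℤ => ℝ) 2) :
    ∀ x, |u x| ≤ Real.sqrt (∑' x', (u x' : ℝ)^2) := by
  have hu2 : Summable fun x : Fin d → ℤ => (u x : ℝ)^2 := by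
    have h := (lp.memℓp u).summable (p := 2) (by norm_num)
    refine h.congr fun x => ?_
    rw [ENNReal.toReal_ofNat, Real.norm_eq_abs,
      show ((2:ℝ)) = ((2:ℕ):ℝ) by norm_num, Real.rpow_natCast, sq_abs]
  intro x
  have h1 : (u x : ℝ)^2 ≤ ∑' x', (u x' : ℝ)^2 := Summable.le_tsum hu2 x (fun y _ => sq_nonneg _)
  calc |u x| = Real.sqrt ((u x : ℝ)^2) := (Real.sqrt_sq_eq_abs _).symm
    _ ≤ Real.sqrt (∑' x', (u x' : ℝ)^2) := Real.sqrt_le_sqrt h1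

lemma summable_conv (a : (Fin d → ℤ) → ℝ) (hsum : Summable fun z => |a z|)
    (u : lp (fun _ : Fin d → ℤ => ℝ) 2) (x : Fin d → ℤ) :
    Summable fun x' : Fin d → ℤ => a (x - x') * u x' := by
  set B := Real.sqrt (∑' x', (u x' : ℝ)^2) with hB
  apply Summable.of_abs
  have habs : Summable fun x' : Fin d → ℤ => |a (x - x')| := by
    refine ((Equiv.subLeft x).summable_iff (f := fun z => |a z|)).mpr hsum |>.congr ?_
    intro x'
    simp [Equiv.subLeft_apply]
  apply Summable.of_nonneg_of_le (fun x' => abs_nonneg _) _ (habs.mul_right B)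
  intro x'
  rw [abs_mul]
  exact mul_le_mul_of_nonneg_left (lp2_bound u x') (abs_nonneg _)



end EigenAux

end

open EigenAux in
/-- `λ > 0` is an eigenvalue of `H` iff `det (G(λ) - I) = 0`, where
`G(λ)_{ij} = β_j I_{x_j - x_i}(λ)`. -/
theorem eigenvalue_iff_det (d : ℕ) (hd : 1 ≤ d) (a : (Fin d → ℤ) → ℝ)
    (hsymm : ∀ z, a z = a (-z))
    (hnonneg : ∀ z, z ≠ 0 → 0 ≤ a z)
    (hneg : a 0 < 0)
    (hsum : Summable fun z => |a z|)
    (htot : ∑' z, a z = 0)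
    (hirr : ∀ z : Fin d → ℤ, ∃ (k : ℕ) (zs : Fin k → Fin d → ℤ),
      z = ∑ i, zs i ∧ ∀ i, a (zs i) ≠ 0)
    (A : lp (fun _ : Fin d → ℤ => ℝ) 2 →L[ℝ] lp (fun _ : Fin d → ℤ => ℝ) 2)
    (hA : ∀ (u : lp (fun _ : Fin d → ℤ => ℝ) 2) (x : Fin d → ℤ),
      A u x = ∑' x' : Fin d → ℤ, a (x - x') * u x')
    (N : ℕ) (hN : 1 ≤ N) (X : Fin N → Fin d → ℤ) (hX : Function.Injective X)
    (β : Fin N → ℝ) (hβ : ∀ j, 0 < β j)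
    (H : lp (fun _ : Fin d → ℤ => ℝ) 2 →L[ℝ] lp (fun _ : Fin d → ℤ => ℝ) 2)
    (hH : ∀ (u : lp (fun _ : Fin d → ℤ => ℝ) 2) (x : Fin d → ℤ),
      H u x = A u x + ∑ j : Fin N, if x = X j then β j * u x else 0)
    (phi : (Fin d → ℝ) → ℝ)
    (hphi : ∀ θ, phi θ = ∑' z : Fin d → ℤ, a z * Real.cos (∑ i, θ i * (z i : ℝ)))
    (I : ℝ → (Fin d → ℤ) → ℝ)
    (hI : ∀ (lam : ℝ) (x : Fin d → ℤ), I lam x = ((2 * Real.pi) ^ d)⁻¹ *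
      ∫ θ in Set.Icc (fun _ : Fin d => -Real.pi) (fun _ : Fin d => Real.pi),
        Real.cos (∑ i, θ i * (x i : ℝ)) / (lam - phi θ))
    (G : ℝ → Matrix (Fin N) (Fin N) ℝ)
    (hG : ∀ (lam : ℝ) (i j : Fin N), G lam i j = β j * I lam (X j - X i))
    (lam : ℝ) (hlam : 0 < lam) :
    (∃ f : lp (fun _ : Fin d → ℤ => ℝ) 2, f ≠ 0 ∧ H f = lam • f) ↔
      Matrix.det (G lam - 1) = 0 := by
  classical
  have hphi' : ∀ θ, phi θ = ∑' z : Fin d → ℤ, a z * Real.cos (EigenAux.ev θ z) := hphi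
  have hIv : ∀ x : Fin d → ℤ, I lam x = ((2*Real.pi)^d)⁻¹ *
      ∫ θ in EigenAux.box d, Real.cos (EigenAux.ev θ x) / (lam - phi θ) := hI lam
  have gmem : ∀ y : Fin d → ℤ, Memℓp (fun x : Fin d → ℤ => I lam (x - y)) 2 :=
    memlp_Iv a phi lam hnonneg hsum htot hphi' hlam (I lam) hIv
  set g : (Fin d → ℤ) → lp (fun _ : Fin d → ℤ => ℝ) 2 :=
    fun y => ⟨fun x => I lam (x - y), gmem y⟩ with hg
  have hgapp : ∀ y x : Fin d → ℤ, (g y) x = I lam (x - y) := fun y x => rfl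
  have key : ∀ y x : Fin d → ℤ,
      lam * I lam (x - y) - (∑' x' : Fin d → ℤ, a (x - x') * I lam (x' - y))
        = if x = y then 1 else 0 :=
    fun y x => resolvent_trans a phi lam hsymm hnonneg hsum htot hphi' hlam (I lam) hIv y x
  have hIeven : ∀ x : Fin d → ℤ, I lam (-x) = I lam x :=
    Iv_even phi lam (I lam) hIv
  have Fapp : ∀ (c : Fin N → ℝ) (x : Fin d → ℤ),
      ((∑ j : Fin N, c j • g (X j)) : lp (fun _ : Fin d → ℤ => ℝ) 2) x
        = ∑ j : Fin N, c j * I lam (x - X j) := by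
    intro c x
    rw [lp.coeFn_sum, Finset.sum_apply]
    refine Finset.sum_congr rfl fun j _ => ?_
    rw [lp.coeFn_smul, Pi.smul_apply, smul_eq_mul, hgapp]
  have Fkey : ∀ (c : Fin N → ℝ) (x : Fin d → ℤ),
      lam * ((∑ j : Fin N, c j • g (X j)) : lp (fun _ : Fin d → ℤ => ℝ) 2) x
        - (∑' x' : Fin d → ℤ,
            a (x - x') * ((∑ j : Fin N, c j • g (X j)) : lp (fun _ : Fin d → ℤ => ℝ) 2) x')
        = ∑ j : Fin N, if x = X j then c j else 0 := by
    intro c x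
    have h1 : ∀ x' : Fin d → ℤ,
        a (x - x') * ((∑ j : Fin N, c j • g (X j)) : lp (fun _ : Fin d → ℤ => ℝ) 2) x'
        = ∑ j : Fin N, c j * (a (x - x') * (g (X j)) x') := by
      intro x'
      rw [Fapp, Finset.mul_sum]
      refine Finset.sum_congr rfl fun j _ => ?_
      rw [hgapp]; ring
    rw [tsum_congr h1, Summable.tsum_finsetSum (fun j _ =>
      ((summable_conv a hsum (g (X j)) x).mul_left (c j)))]
    have h2 : ∀ j : Fin N, (∑' x', c j * (a (x - x') * (g (X j)) x'))
        = c j * (lam * I lam (x - X j) - if x = X j then 1 else 0) := by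
      intro j
      rw [tsum_mul_left]
      congr 1
      have h3 : (∑' x' : Fin d → ℤ, a (x - x') * (g (X j)) x')
          = ∑' x' : Fin d → ℤ, a (x - x') * I lam (x' - X j) :=
        tsum_congr fun x' => by rw [hgapp]
      rw [h3]
      linarith [key (X j) x]
    rw [Finset.sum_congr rfl (fun j _ => h2 j), Fapp, Finset.mul_sum,
      ← Finset.sum_sub_distrib]
    refine Finset.sum_congr rfl fun j _ => ?_
    split_ifs with h <;> ring
  have FatX : ∀ (c : Fin N → ℝ) (i : Fin N),
      ((∑ j : Fin N, c j • g (X j)) : lp (fun _ : Fin d → ℤ => ℝ) 2) (X i)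
        = ∑ j : Fin N, I lam (X j - X i) * c j := by
    intro c i
    rw [Fapp]
    refine Finset.sum_congr rfl fun j _ => ?_
    rw [show (X i - X j) = -(X j - X i) from (neg_sub _ _).symm, hIeven]
    ring
  have hmv : ∀ (v : Fin N → ℝ) (i : Fin N),
      ((G lam - 1).mulVec v) i = (∑ j, G lam i j * v j) - v i := by
    intro v i
    simp [Matrix.mulVec, dotProduct, Matrix.sub_apply, Matrix.one_apply, sub_mul,
      Finset.sum_sub_distrib, ite_mul, one_mul, zero_mul, Finset.sum_ite_eq,
      Finset.mem_univ]
  constructor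
  · rintro ⟨f, hf0, hfeq⟩
    set w : Fin N → ℝ := fun i => f (X i) with hwdef
    set c : Fin N → ℝ := fun j => β j * w j with hcdef
    set f' : lp (fun _ : Fin d → ℤ => ℝ) 2 := ∑ j : Fin N, c j • g (X j) with hf'
    have hpt : ∀ x, lam * f x - (∑' x', a (x - x') * f x')
        = ∑ j : Fin N, if x = X j then c j else 0 := by
      intro x
      have h1 := hH f x
      have h2 : (H f) x = lam * f x := by
        rw [hfeq, lp.coeFn_smul, Pi.smul_apply, smul_eq_mul]
      rw [h2, hA f x] at h1
      have h3 : (∑ j : Fin N, if x = X j then β j * f x else 0)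
          = ∑ j : Fin N, if x = X j then c j else 0 := by
        refine Finset.sum_congr rfl fun j _ => ?_
        split_ifs with h
        · rw [h]
        · rfl
      rw [h3] at h1
      linarith
    have hpt' : ∀ x, lam * f' x - (∑' x', a (x - x') * f' x')
        = ∑ j : Fin N, if x = X j then c j else 0 := by
      intro x
      have h5 := Fkey c x
      rw [← hf'] at h5
      exact h5
    have hfe : f = f' := by
      have hz : f - f' = 0 := by
        apply lam_sub_A_inj d a hnonneg hsum htot lam hlam
        intro x
        have hsub : ((f - f') : lp (fun _ : Fin d → ℤ => ℝ) 2) x = f x - f' x := by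
          rw [lp.coeFn_sub, Pi.sub_apply]
        have hsum1 := summable_conv a hsum f x
        have hsum2 := summable_conv a hsum f' x
        have hts : (∑' x', a (x - x') * ((f - f') : lp (fun _ : Fin d → ℤ => ℝ) 2) x')
            = (∑' x', a (x - x') * f x') - ∑' x', a (x - x') * f' x' := by
          rw [← Summable.tsum_sub hsum1 hsum2]
          refine tsum_congr fun x' => ?_
          rw [lp.coeFn_sub, Pi.sub_apply]
          ring
        rw [hsub, hts]
        have hp1 := hpt x
        have hp2 := hpt' x
        linarith
      have := sub_eq_zero.mp hz
      exact this
    have hGw : (G lam - 1).mulVec w = 0 := by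
      funext i
      rw [hmv]
      have h4 : w i = ∑ j, G lam i j * w j := by
        calc w i = f (X i) := rfl
          _ = f' (X i) := by rw [hfe]
          _ = ∑ j : Fin N, I lam (X j - X i) * c j := by
              rw [hf']; exact FatX c i
          _ = ∑ j, G lam i j * w j := by
              refine Finset.sum_congr rfl fun j _ => ?_
              rw [hG]; simp only [hcdef, hwdef]; ring
      rw [← h4, sub_self, Pi.zero_apply]
    have hwne : w ≠ 0 := by
      intro hw0
      apply hf0
      rw [hfe, hf']
      have hcz : ∀ j, c j • g (X j) = 0 := by
        intro j
        have : c j = 0 := by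
          have h7 := congrFun hw0 j
          rw [Pi.zero_apply] at h7
          simp only [hcdef]
          rw [h7, mul_zero]
        rw [this, zero_smul]
      rw [Finset.sum_congr rfl (fun j _ => hcz j), Finset.sum_const_zero]
    exact Matrix.exists_mulVec_eq_zero_iff.mp ⟨w, hwne, hGw⟩
  · intro hdet
    obtain ⟨v, hv0, hveq⟩ := Matrix.exists_mulVec_eq_zero_iff.mpr hdet
    set c : Fin N → ℝ := fun j => β j * v j with hcdef
    set f : lp (fun _ : Fin d → ℤ => ℝ) 2 := ∑ j : Fin N, c j • g (X j) with hf
    have hfX : ∀ i, f (X i) = v i := by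
      intro i
      have h1 : f (X i) = ∑ j : Fin N, I lam (X j - X i) * c j := by
        rw [hf]; exact FatX c i
      have h2 : (∑ j : Fin N, I lam (X j - X i) * c j) = ∑ j, G lam i j * v j := by
        refine Finset.sum_congr rfl fun j _ => ?_
        rw [hG]; simp only [hcdef]; ring
      have h3 := congrFun hveq i
      rw [hmv, Pi.zero_apply] at h3
      rw [h1, h2]
      linarith
    have hfne : f ≠ 0 := by
      obtain ⟨i, hi⟩ := Function.ne_iff.mp hv0
      intro h0
      apply hi
      rw [← hfX i, h0]
      rfl
    refine ⟨f, hfne, ?_⟩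
    apply lp.ext
    funext x
    have hr : ((lam • f) : lp (fun _ : Fin d → ℤ => ℝ) 2) x = lam * f x := by
      rw [lp.coeFn_smul, Pi.smul_apply, smul_eq_mul]
    rw [hH f x, hA f x, hr]
    have h5 := Fkey c x
    rw [← hf] at h5
    have h6 : (∑ j : Fin N, if x = X j then β j * f x else 0)
        = ∑ j : Fin N, if x = X j then c j else 0 := by
      refine Finset.sum_congr rfl fun j _ => ?_
      split_ifs with h
      · rw [h, hfX j]
      · rfl
    rw [h6]
    linarith
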